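/- arXiv:1310.1239 — 2 statements merged into one kernel-verified Lean document; each statement's English description precedes it below -/
import Mathlib

section
/- For all integers n ≥ 2, HB_n^{(ν,k)}(x) = −ν(n−1) HB_{n-2}^{(ν,k)}(x) + x · HB_{n-1}^{(ν,k)}(x) + \frac{1}{n} \sum_{l=0}^{n} \binom{n}{l} B_l ( HB_{n-l}^{(ν,k-1)}(x) − HB_{n-l}^{(ν,k)}(x) ), where B_l are the ordinary Bernoulli numbers (with B_1 = -1/2). -/
open PowerSeries Finset

/-- The power series e^{-t}. -/
noncomputable def expNeg : PowerSeries ℝ := rescale (-1) (PowerSeries.exp ℝ)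

/-- Li_k(1-e^{-t})/(1-e^{-t}) = ∑_{m≥0} (1-e^{-t})^m/(m+1)^k as a formal power series. -/
noncomputable def pbGF (k : ℤ) : PowerSeries ℝ :=
  PowerSeries.mk fun n => ∑ m ∈ Finset.range (n + 1),
    (1 / ((m : ℝ) + 1) ^ k) * PowerSeries.coeff n ((1 - expNeg) ^ m)

/-- The power series e^{-ν t²/2}. -/
noncomputable def hermGF (ν : ℝ) : PowerSeries ℝ :=
  PowerSeries.mk fun n =>
    if Even n then (-ν / 2) ^ (n / 2) / (Nat.factorial (n / 2)) else 0

/-- Hermite and poly-Bernoulli mixed-type polynomials. -/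
noncomputable def HB (ν : ℝ) (k : ℤ) (n : ℕ) (x : ℝ) : ℝ :=
  (Nat.factorial n) *
    PowerSeries.coeff n (hermGF ν * pbGF k * rescale x (PowerSeries.exp ℝ))

/-- Poly-Bernoulli polynomials. -/
noncomputable def pB (k : ℤ) (n : ℕ) (x : ℝ) : ℝ :=
  (Nat.factorial n) * PowerSeries.coeff n (pbGF k * rescale x (PowerSeries.exp ℝ))

/-- Hermite polynomials of order ν. -/
noncomputable def Herm (ν : ℝ) (n : ℕ) (x : ℝ) : ℝ :=
  (Nat.factorial n) * PowerSeries.coeff n (hermGF ν * rescale x (PowerSeries.exp ℝ))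

/-- Stirling numbers of the second kind. -/
def S2 : ℕ → ℕ → ℕ
  | 0, 0 => 1
  | 0, _ + 1 => 0
  | _ + 1, 0 => 0
  | n + 1, m + 1 => (m + 1) * S2 n (m + 1) + S2 n m

/-! ### Auxiliary lemmas -/

noncomputable def uS : PowerSeries ℝ := 1 - expNeg

lemma exp_mul_expNeg : PowerSeries.exp ℝ * expNeg = 1 :=
  PowerSeries.exp_mul_exp_neg_eq_one

lemma coeff_zero_expNeg : coeff 0 expNeg = 1 := by
  rw [expNeg, coeff_rescale, PowerSeries.coeff_exp]
  norm_num

lemma constCoeff_uS : constantCoeff uS = 0 := by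
  rw [← coeff_zero_eq_constantCoeff_apply, uS, map_sub, coeff_zero_expNeg]
  simp

lemma coeff_uS_pow_eq_zero {n m : ℕ} (h : n < m) : coeff n (uS ^ m) = 0 := by
  have : (X : PowerSeries ℝ)^m ∣ uS^m :=
    pow_dvd_pow_of_dvd (PowerSeries.X_dvd_iff.mpr constCoeff_uS) m
  exact (PowerSeries.X_pow_dvd_iff.mp this) n h

noncomputable def cc (k : ℤ) (m : ℕ) : ℝ := 1 / ((m : ℝ) + 1) ^ k

noncomputable def P (N : ℕ) (k : ℤ) : PowerSeries ℝ :=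
  ∑ m ∈ Finset.range N, C (cc k m) * uS ^ m

lemma coeff_P (N : ℕ) (k : ℤ) (n : ℕ) :
    coeff n (P N k) = ∑ m ∈ Finset.range N, cc k m * coeff n (uS ^ m) := by
  rw [P, map_sum]
  exact Finset.sum_congr rfl fun m _ => by rw [coeff_C_mul]

lemma coeff_pbGF_trunc (k : ℤ) {n N : ℕ} (h : n < N) :
    coeff n (pbGF k) = coeff n (P N k) := by
  rw [pbGF, coeff_mk, coeff_P]
  simp only [show (1 - expNeg) = uS from rfl, show ∀ m:ℕ, 1/((m:ℝ)+1)^k = cc k m from fun _ => rfl]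
  refine Finset.sum_subset (Finset.range_subset_range.mpr h) ?_
  intro m _ hmn
  simp only [Finset.mem_range, not_lt] at hmn
  rw [coeff_uS_pow_eq_zero (by omega), mul_zero]

lemma derivative_expNeg : d⁄dX ℝ expNeg = -expNeg := by
  ext n
  simp [PowerSeries.coeff_derivative, expNeg, coeff_rescale, coeff_exp]
  rw [pow_succ, Nat.factorial_succ]
  have h1 : ((n:ℝ)+1) ≠ 0 := by positivity
  have h2 : ((n.factorial :ℝ)) ≠ 0 := by positivity
  push_cast
  field_simp

lemma derivative_uS : d⁄dX ℝ uS = expNeg := by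
  rw [uS, map_sub, derivative_expNeg, (d⁄dX ℝ).map_one_eq_zero]
  simp

lemma cc_step (k : ℤ) (m : ℕ) : cc (k-1) m - cc k m = (m : ℝ) * cc k m := by
  have h : ((m:ℝ) + 1) ≠ 0 := by positivity
  rw [cc, cc, zpow_sub₀ h]
  field_simp
  ring

lemma P_identity (N : ℕ) (k : ℤ) :
    uS * d⁄dX ℝ (P N k) = expNeg * (P N (k-1) - P N k) := by
  have hL : uS * d⁄dX ℝ (P N k)
      = ∑ m ∈ Finset.range N, uS * d⁄dX ℝ (C (cc k m) * uS ^ m) := by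
    rw [P, map_sum, Finset.mul_sum]
  have hR : expNeg * (P N (k-1) - P N k)
      = ∑ m ∈ Finset.range N,
          expNeg * (C (cc (k-1) m) * uS ^ m - C (cc k m) * uS ^ m) := by
    rw [P, P, ← Finset.sum_sub_distrib, Finset.mul_sum]
  rw [hL, hR]
  refine Finset.sum_congr rfl fun m _ => ?_
  rw [Derivation.leibniz, PowerSeries.derivative_C, Derivation.leibniz_pow, derivative_uS]
  rw [← sub_mul, ← map_sub, cc_step]
  cases m with
  | zero => simp
  | succ j =>
    simp only [smul_eq_mul, mul_zero, add_zero, nsmul_eq_mul, Nat.add_sub_cancel]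
    rw [map_mul, map_natCast]
    push_cast
    rw [pow_succ]
    ring

lemma coeff_mul_eq_zero {f g : PowerSeries ℝ} {n : ℕ} (h : ∀ j, j ≤ n → coeff j g = 0) :
    coeff n (f * g) = 0 := by
  rw [PowerSeries.coeff_mul]
  refine Finset.sum_eq_zero fun p hp => ?_
  have := Finset.HasAntidiagonal.mem_antidiagonal.mp hp
  rw [h p.2 (by omega), mul_zero]

lemma key_pbGF (k : ℤ) : uS * d⁄dX ℝ (pbGF k) = expNeg * (pbGF (k-1) - pbGF k) := by
  ext n
  have e1 : coeff n (uS * d⁄dX ℝ (pbGF k)) = coeff n (uS * d⁄dX ℝ (P (n+2) k)) := by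
    have hsplit : uS * d⁄dX ℝ (pbGF k)
        = uS * d⁄dX ℝ (P (n+2) k) + uS * d⁄dX ℝ (pbGF k - P (n+2) k) := by
      rw [map_sub]; ring
    rw [hsplit, map_add, coeff_mul_eq_zero (g := d⁄dX ℝ (pbGF k - P (n+2) k)), add_zero]
    intro j hj
    rw [PowerSeries.coeff_derivative, map_sub, coeff_pbGF_trunc k (by omega : j+1 < n+2),
      sub_self, zero_mul]
  have e2 : coeff n (expNeg * (pbGF (k-1) - pbGF k))
      = coeff n (expNeg * (P (n+2) (k-1) - P (n+2) k)) := by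
    have hsplit : expNeg * (pbGF (k-1) - pbGF k)
        = expNeg * (P (n+2) (k-1) - P (n+2) k)
          + expNeg * ((pbGF (k-1) - P (n+2) (k-1)) - (pbGF k - P (n+2) k)) := by
      ring
    rw [hsplit, map_add, coeff_mul_eq_zero
      (g := (pbGF (k-1) - P (n+2) (k-1)) - (pbGF k - P (n+2) k)), add_zero]
    intro j hj
    rw [map_sub, map_sub, map_sub, coeff_pbGF_trunc (k-1) (by omega : j < n+2),
      coeff_pbGF_trunc k (by omega : j < n+2), sub_self, sub_self, sub_self]
  rw [e1, e2, P_identity]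

lemma uS_eq : uS = (PowerSeries.exp ℝ - 1) * expNeg := by
  rw [sub_mul, one_mul, exp_mul_expNeg, uS]

lemma X_mul_D_pbGF (k : ℤ) :
    X * d⁄dX ℝ (pbGF k) = bernoulliPowerSeries ℝ * (pbGF (k-1) - pbGF k) := by
  have hu : bernoulliPowerSeries ℝ * uS = X * expNeg := by
    rw [uS_eq, ← mul_assoc, bernoulliPowerSeries_mul_exp_sub_one]
  have h := key_pbGF k
  have h2 : expNeg * (X * d⁄dX ℝ (pbGF k))
      = expNeg * (bernoulliPowerSeries ℝ * (pbGF (k-1) - pbGF k)) := by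
    linear_combination (bernoulliPowerSeries ℝ) * h - (d⁄dX ℝ (pbGF k)) * hu
  linear_combination (PowerSeries.exp ℝ) * h2
    - (X * d⁄dX ℝ (pbGF k) - bernoulliPowerSeries ℝ * (pbGF (k-1) - pbGF k)) * exp_mul_expNeg

lemma derivative_rescale_exp (x : ℝ) :
    d⁄dX ℝ (rescale x (PowerSeries.exp ℝ)) = C x * rescale x (PowerSeries.exp ℝ) := by
  ext n
  simp [PowerSeries.coeff_derivative, coeff_rescale, coeff_exp]
  rw [pow_succ, Nat.factorial_succ]
  have h1 : ((n:ℝ)+1) ≠ 0 := by positivity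
  have h2 : ((n.factorial :ℝ)) ≠ 0 := by positivity
  push_cast
  field_simp

lemma derivative_hermGF (ν : ℝ) :
    d⁄dX ℝ (hermGF ν) = C (-ν) * (X * hermGF ν) := by
  ext n
  rw [PowerSeries.coeff_derivative, coeff_C_mul]
  cases n with
  | zero => simp [hermGF, Nat.even_add_one]
  | succ m =>
    rw [coeff_succ_X_mul]
    rcases Nat.even_or_odd m with he | ho
    · obtain ⟨j, rfl⟩ := he
      have h1 : Even (j + j + 1 + 1) := ⟨j+1, by ring⟩
      have h2 : Even (j + j) := ⟨j, rfl⟩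
      have h3 : (j + j + 1 + 1) / 2 = j + 1 := by omega
      have h4 : (j + j) / 2 = j := by omega
      simp only [hermGF, coeff_mk, if_pos h1, if_pos h2, h3, h4]
      rw [pow_succ, Nat.factorial_succ]
      have hj1 : ((j:ℝ)+1) ≠ 0 := by positivity
      have hj2 : ((j.factorial :ℝ)) ≠ 0 := by positivity
      push_cast
      field_simp
      ring
    · have h1 : ¬ Even (m + 1 + 1) := by
        simp [Nat.even_add_one, Nat.not_even_iff_odd.mpr ho]
      have h2 : ¬ Even m := Nat.not_even_iff_odd.mpr ho
      simp [hermGF, h1, h2]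

lemma main_id (ν x : ℝ) (k : ℤ) :
    X * d⁄dX ℝ (hermGF ν * pbGF k * rescale x (PowerSeries.exp ℝ))
      = C (-ν) * (X^2 * (hermGF ν * pbGF k * rescale x (PowerSeries.exp ℝ)))
        + C x * (X * (hermGF ν * pbGF k * rescale x (PowerSeries.exp ℝ)))
        + bernoulliPowerSeries ℝ *
            (hermGF ν * pbGF (k-1) * rescale x (PowerSeries.exp ℝ)
              - hermGF ν * pbGF k * rescale x (PowerSeries.exp ℝ)) := by
  set h := hermGF ν
  set p := pbGF k
  set e := rescale x (PowerSeries.exp ℝ)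
  have hD : d⁄dX ℝ (h * p * e)
      = d⁄dX ℝ h * p * e + h * d⁄dX ℝ p * e + h * p * d⁄dX ℝ e := by
    rw [Derivation.leibniz, Derivation.leibniz]
    simp only [smul_eq_mul]
    ring
  have h1 := derivative_hermGF ν
  have h2 := X_mul_D_pbGF k
  have h3 := derivative_rescale_exp x
  linear_combination X * p * e * h1 + h * e * h2 + X * h * p * h3 + X * hD

lemma coeff_extract (ν x : ℝ) (k : ℤ) (m : ℕ) :
    ((m:ℝ) + 2) * coeff (m+2) (hermGF ν * pbGF k * rescale x (PowerSeries.exp ℝ))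
      = -ν * coeff m (hermGF ν * pbGF k * rescale x (PowerSeries.exp ℝ))
        + x * coeff (m+1) (hermGF ν * pbGF k * rescale x (PowerSeries.exp ℝ))
        + ∑ l ∈ Finset.range (m+2+1), ((bernoulli l : ℝ) / (Nat.factorial l : ℝ)) *
            (coeff (m+2-l) (hermGF ν * pbGF (k-1) * rescale x (PowerSeries.exp ℝ))
              - coeff (m+2-l) (hermGF ν * pbGF k * rescale x (PowerSeries.exp ℝ))) := by
  have hb : ∀ (g : PowerSeries ℝ) (n : ℕ),
      coeff n (bernoulliPowerSeries ℝ * g)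
        = ∑ l ∈ Finset.range (n+1),
            ((bernoulli l : ℝ) / (Nat.factorial l : ℝ)) * coeff (n-l) g := by
    intro g n
    rw [PowerSeries.coeff_mul, Finset.Nat.sum_antidiagonal_eq_sum_range_succ_mk]
    refine Finset.sum_congr rfl fun l _ => ?_
    rw [bernoulliPowerSeries, coeff_mk, eq_ratCast (algebraMap ℚ ℝ)]
    push_cast
    ring
  have := congrArg (coeff (m+2)) (main_id ν x k)
  rw [coeff_succ_X_mul, PowerSeries.coeff_derivative, map_add, map_add, coeff_C_mul,
    coeff_C_mul, coeff_succ_X_mul, PowerSeries.coeff_X_pow_mul, hb] at this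
  rw [show ((m:ℝ)+2) = ((m+1 : ℕ):ℝ) + 1 by push_cast; ring, mul_comm]
  rw [this]
  simp only [map_sub]

theorem HB_recurrence' (ν : ℝ) (hν : ν ≠ 0) (k : ℤ) (n : ℕ) (hn : 2 ≤ n) (x : ℝ) :
    HB ν k n x = -ν * ((n : ℝ) - 1) * HB ν k (n - 2) x + x * HB ν k (n - 1) x +
      (1 / (n : ℝ)) * ∑ l ∈ Finset.range (n + 1),
        (n.choose l : ℝ) * (bernoulli l : ℝ) *
          (HB ν (k - 1) (n - l) x - HB ν k (n - l) x) := by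
  obtain ⟨m, rfl⟩ : ∃ m, n = m + 2 := ⟨n - 2, by omega⟩
  have hext := coeff_extract ν x k m
  simp only [HB, show m+2-2 = m from rfl, show m+2-1 = m+1 from rfl]
  rw [Finset.mul_sum]
  calc ((m+2).factorial : ℝ) * coeff (m+2) (hermGF ν * pbGF k * rescale x (PowerSeries.exp ℝ))
      = ((m+1).factorial : ℝ) *
          (((m:ℝ)+2) * coeff (m+2) (hermGF ν * pbGF k * rescale x (PowerSeries.exp ℝ))) := by
        rw [Nat.factorial_succ (m+1)]; push_cast; ring
    _ = ((m+1).factorial : ℝ) *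
          (-ν * coeff m (hermGF ν * pbGF k * rescale x (PowerSeries.exp ℝ))
        + x * coeff (m+1) (hermGF ν * pbGF k * rescale x (PowerSeries.exp ℝ))
        + ∑ l ∈ Finset.range (m+2+1), ((bernoulli l : ℝ) / (Nat.factorial l : ℝ)) *
            (coeff (m+2-l) (hermGF ν * pbGF (k-1) * rescale x (PowerSeries.exp ℝ))
              - coeff (m+2-l) (hermGF ν * pbGF k * rescale x (PowerSeries.exp ℝ)))) := by
        rw [hext]
    _ = _ := by
        rw [mul_add, mul_add, Finset.mul_sum]
        congr 1
        · congr 1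
          · rw [Nat.factorial_succ m]; push_cast; ring
          · ring
        · refine Finset.sum_congr rfl fun l hl => ?_
          have hl' : l ≤ m + 2 := by simpa using Nat.lt_succ_iff.mp (Finset.mem_range.mp hl)
          have key : ((Nat.choose (m+2) l : ℝ)) * ((Nat.factorial l : ℝ)) *
              ((Nat.factorial (m+2-l) : ℝ)) = ((Nat.factorial (m+2) : ℝ)) := by
            exact_mod_cast congrArg Nat.cast (Nat.choose_mul_factorial_mul_factorial hl')
          have hfact : ((Nat.factorial (m+2) : ℝ)) = ((m:ℝ)+2) * (Nat.factorial (m+1) : ℝ) := by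
            rw [Nat.factorial_succ (m+1)]; push_cast; ring
          have hfl : (Nat.factorial l : ℝ) ≠ 0 := by positivity
          have hm2 : ((m:ℝ)+2) ≠ 0 := by positivity
          push_cast
          rw [one_div, inv_mul_eq_div, eq_div_iff hm2]
          field_simp
          linear_combination (-((bernoulli l : ℝ)) *
            (coeff (m+2-l) (hermGF ν * pbGF (k-1) * rescale x (PowerSeries.exp ℝ))
              - coeff (m+2-l) (hermGF ν * pbGF k * rescale x (PowerSeries.exp ℝ)))) * (key.trans hfact)
end

section
/- For all nonnegative integers n, \sum_{m=0}^{n} (-1)^{n-m} \binom{n+1}{m} HB_m^{(ν,k)} = \sum_{m=0}^{n} \sum_{l=m}^{n} (-1)^{l-m} \binom{l}{m} \binom{n+1}{l+1} B_m^{(k-1)} H_{n-l}^{(ν)}, where HB_m^{(ν,k)} = HB_m^{(ν,k)}(0), B_m^{(k-1)} = B_m^{(k-1)}(0) are the poly-Bernoulli numbers of index k−1, and H_j^{(ν)} = H_j^{(ν)}(0) are the Hermite numbers of order ν. -/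
open PowerSeries Finset

/-! ### Auxiliary lemmas -/

lemma coeff_expNeg (n : ℕ) : coeff n expNeg = (-1)^n / n.factorial := by
  simp [expNeg, coeff_rescale, coeff_exp]
  ring

lemma constCoeff_U : constantCoeff (1 - expNeg) = 0 := by
  have h := coeff_expNeg 0
  simp only [pow_zero, Nat.factorial_zero, Nat.cast_one, div_one,
    coeff_zero_eq_constantCoeff] at h
  rw [map_sub, map_one, h, sub_self]

lemma coeff_U_pow_mul {j m : ℕ} (h : j < m) (f : PowerSeries ℝ) :
    coeff j ((1 - expNeg)^m * f) = 0 := by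
  have hd : (X : PowerSeries ℝ)^m ∣ (1 - expNeg)^m * f :=
    Dvd.dvd.mul_right (pow_dvd_pow_of_dvd (X_dvd_iff.mpr constCoeff_U) m) f
  exact X_pow_dvd_iff.mp hd j h

lemma coeff_U_pow {j m : ℕ} (h : j < m) : coeff j ((1 - expNeg)^m) = 0 := by
  simpa using coeff_U_pow_mul h 1

lemma coeff_pbGF (k : ℤ) (n : ℕ) :
    coeff n (pbGF k) = ∑ m ∈ range (n+1), (1/((m:ℝ)+1)^k) * coeff n ((1-expNeg)^m) := by
  simp [pbGF]

lemma coeff_pbGF_mul (k : ℤ) (f : PowerSeries ℝ) (n : ℕ) :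
    coeff n (pbGF k * f)
      = ∑ m ∈ range (n+1), (1/((m:ℝ)+1)^k) * coeff n ((1-expNeg)^m * f) := by
  rw [coeff_mul]
  have step : ∀ p ∈ antidiagonal n,
      coeff p.1 (pbGF k) * coeff p.2 f
        = ∑ m ∈ range (n+1), (1/((m:ℝ)+1)^k) * (coeff p.1 ((1-expNeg)^m) * coeff p.2 f) := by
    intro p hp
    have hp1 : p.1 ≤ n := by have := Finset.HasAntidiagonal.mem_antidiagonal.mp hp; omega
    rw [coeff_pbGF, Finset.sum_mul]
    have h1 : ∀ m : ℕ, (1/((m:ℝ)+1)^k) * coeff p.1 ((1-expNeg)^m) * coeff p.2 f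
        = (1/((m:ℝ)+1)^k) * (coeff p.1 ((1-expNeg)^m) * coeff p.2 f) := fun m => by ring
    simp_rw [h1]
    refine Finset.sum_subset (Finset.range_subset_range.mpr (by omega)) ?_
    intro m hm hnm
    have hlt : p.1 < m := by
      simp only [Finset.mem_range, not_lt] at hnm
      omega
    rw [coeff_U_pow hlt]
    ring
  rw [Finset.sum_congr rfl step, Finset.sum_comm]
  refine Finset.sum_congr rfl fun m _ => ?_
  rw [coeff_mul, Finset.mul_sum]

lemma deriv_expNeg : d⁄dX ℝ expNeg = - expNeg := by
  ext n
  rw [coeff_derivative, map_neg, coeff_expNeg, coeff_expNeg, Nat.factorial_succ]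
  push_cast
  have h : ((n.factorial : ℝ)) ≠ 0 := by exact_mod_cast Nat.factorial_ne_zero n
  field_simp
  ring

lemma deriv_U_pow (m : ℕ) :
    d⁄dX ℝ ((1 - expNeg)^(m+1))
      = ((m+1 : ℕ) : PowerSeries ℝ) * ((1 - expNeg)^m * expNeg) := by
  rw [(d⁄dX ℝ).leibniz_pow (a := 1 - expNeg) (m+1)]
  rw [map_sub, deriv_expNeg]
  simp [smul_eq_mul, nsmul_eq_mul]

lemma key_coeff (m i : ℕ) :
    ((i:ℝ)+1) * coeff (i+1) ((1 - expNeg)^(m+1))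
      = ((m:ℝ)+1) * coeff i ((1 - expNeg)^m * expNeg) := by
  have h := congrArg (coeff i) (deriv_U_pow m)
  rw [coeff_derivative] at h
  rw [← map_natCast (C (R := ℝ)) (m+1), coeff_C_mul] at h
  push_cast at h
  linarith [h]

lemma key (k : ℤ) (i : ℕ) :
    ((i:ℝ)+1) * coeff (i+1) (pbGF k * (1 - expNeg)) = coeff i (pbGF (k-1) * expNeg) := by
  rw [coeff_pbGF_mul, Finset.mul_sum, coeff_pbGF_mul]
  have lhs_eq : ∀ m ∈ range (i+1+1),
      ((i:ℝ)+1) * ((1/((m:ℝ)+1)^k) * coeff (i+1) ((1-expNeg)^m * (1-expNeg)))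
        = (1/((m:ℝ)+1)^(k-1)) * coeff i ((1-expNeg)^m * expNeg) := by
    intro m _
    rw [← pow_succ]
    have e1 : ((i:ℝ)+1) * ((1/((m:ℝ)+1)^k) * coeff (i+1) ((1-expNeg)^(m+1)))
        = (1/((m:ℝ)+1)^k) * (((i:ℝ)+1) * coeff (i+1) ((1-expNeg)^(m+1))) := by ring
    rw [e1, key_coeff]
    have hm : ((m:ℝ)+1) ≠ 0 := by positivity
    have e2 : (1/((m:ℝ)+1)^k) * ((m:ℝ)+1) = 1/((m:ℝ)+1)^(k-1) := by
      rw [zpow_sub_one₀ hm]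
      field_simp
    calc (1/((m:ℝ)+1)^k) * (((m:ℝ)+1) * coeff i ((1-expNeg)^m * expNeg))
        = ((1/((m:ℝ)+1)^k) * ((m:ℝ)+1)) * coeff i ((1-expNeg)^m * expNeg) := by ring
      _ = _ := by rw [e2]
  rw [Finset.sum_congr rfl lhs_eq, Finset.sum_range_succ, coeff_U_pow_mul (Nat.lt_succ_self i),
    mul_zero, add_zero]

lemma constCoeff_L (k : ℤ) : coeff 0 (pbGF k * (1 - expNeg)) = 0 := by
  rw [coeff_zero_eq_constantCoeff, map_mul, constCoeff_U, mul_zero]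

lemma rescale_zero_exp : rescale (0:ℝ) (PowerSeries.exp ℝ) = 1 := by
  rw [rescale_zero]; simp [PowerSeries.exp]

lemma HB0 (ν : ℝ) (k : ℤ) (m : ℕ) :
    HB ν k m 0 = (m.factorial : ℝ) * coeff m (hermGF ν * pbGF k) := by
  rw [HB, rescale_zero_exp, mul_one]

lemma pB0 (k : ℤ) (m : ℕ) : pB k m 0 = (m.factorial : ℝ) * coeff m (pbGF k) := by
  rw [pB, rescale_zero_exp, mul_one]

lemma Herm0 (ν : ℝ) (m : ℕ) : Herm ν m 0 = (m.factorial : ℝ) * coeff m (hermGF ν) := by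
  rw [Herm, rescale_zero_exp, mul_one]

lemma coeff_mul_one_sub (F : PowerSeries ℝ) (n : ℕ) :
    coeff (n+1) (F * (1 - expNeg))
      = - ∑ m ∈ range (n+1), coeff m F * ((-1:ℝ)^(n+1-m) / ((n+1-m).factorial)) := by
  rw [mul_sub, mul_one, map_sub, coeff_mul,
    Finset.Nat.sum_antidiagonal_eq_sum_range_succ_mk, Finset.sum_range_succ]
  simp only [coeff_expNeg]
  simp

lemma lhs_eq (ν : ℝ) (k : ℤ) (n : ℕ) :
    ∑ m ∈ Finset.range (n + 1), (-1 : ℝ) ^ (n - m) * ((n + 1).choose m : ℝ) * HB ν k m 0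
      = ((n+1).factorial : ℝ) * coeff (n+1) (hermGF ν * pbGF k * (1 - expNeg)) := by
  rw [coeff_mul_one_sub (hermGF ν * pbGF k) n, mul_neg, Finset.mul_sum, ← Finset.sum_neg_distrib]
  refine Finset.sum_congr rfl fun m hm => ?_
  have hmn : m ≤ n := by simpa [Nat.lt_succ_iff] using hm
  rw [HB0]
  have hpow : ((-1:ℝ))^(n+1-m) = -(-1:ℝ)^(n-m) := by
    rw [show n+1-m = (n-m)+1 by omega, pow_succ]
    ring
  rw [hpow, Nat.cast_choose ℝ (by omega : m ≤ n+1)]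
  have h1 : ((m.factorial : ℝ)) ≠ 0 := by exact_mod_cast Nat.factorial_ne_zero _
  have h2 : (((n+1-m).factorial : ℝ)) ≠ 0 := by exact_mod_cast Nat.factorial_ne_zero _
  field_simp

lemma rhs_eq (ν : ℝ) (k : ℤ) (n : ℕ) :
    ((n+1).factorial : ℝ) * coeff (n+1) ((pbGF k * (1 - expNeg)) * hermGF ν)
      = ∑ l ∈ range (n+1), ∑ m ∈ range (l+1),
          (-1 : ℝ) ^ (l - m) * (l.choose m : ℝ) * ((n + 1).choose (l + 1) : ℝ) *
            pB (k - 1) m 0 * Herm ν (n - l) 0 := by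
  rw [coeff_mul, Finset.Nat.sum_antidiagonal_eq_sum_range_succ_mk, Finset.sum_range_succ']
  rw [constCoeff_L, zero_mul, add_zero, Finset.mul_sum]
  refine Finset.sum_congr rfl fun l hl => ?_
  have hln : l ≤ n := by simpa [Nat.lt_succ_iff] using hl
  have hl1 : ((l:ℝ)+1) ≠ 0 := by positivity
  have hcoeffL : coeff (l+1) (pbGF k * (1 - expNeg))
      = coeff l (pbGF (k-1) * expNeg) / ((l:ℝ)+1) := by
    rw [eq_div_iff hl1, mul_comm, key]
  have hsub : n + 1 - (l + 1) = n - l := by omega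
  rw [hsub, hcoeffL]
  have hcoeffPB : coeff l (pbGF (k-1) * expNeg)
      = ∑ m ∈ range (l+1),
          (pB (k-1) m 0 / (m.factorial : ℝ)) * ((-1:ℝ)^(l-m) / ((l-m).factorial : ℝ)) := by
    rw [coeff_mul, Finset.Nat.sum_antidiagonal_eq_sum_range_succ_mk]
    refine Finset.sum_congr rfl fun m hm => ?_
    rw [coeff_expNeg, pB0]
    have : ((m.factorial : ℝ)) ≠ 0 := by exact_mod_cast Nat.factorial_ne_zero _
    field_simp
  rw [hcoeffPB, Finset.sum_div, Finset.sum_mul, Finset.mul_sum]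
  refine Finset.sum_congr rfl fun m hm => ?_
  have hml : m ≤ l := by simpa [Nat.lt_succ_iff] using hm
  rw [Herm0]
  have hch2 : (((n+1).choose (l+1) : ℝ)) = ((n+1).factorial : ℝ) / (((l+1).factorial : ℝ) * ((n-l).factorial : ℝ)) := by
    rw [Nat.cast_choose ℝ (by omega : l+1 ≤ n+1), hsub]
  rw [Nat.cast_choose ℝ hml, hch2, Nat.factorial_succ (l)]
  have hm0 : ((m.factorial : ℝ)) ≠ 0 := by exact_mod_cast Nat.factorial_ne_zero _
  have hl0 : ((l.factorial : ℝ)) ≠ 0 := by exact_mod_cast Nat.factorial_ne_zero _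
  have hlm0 : (((l-m).factorial : ℝ)) ≠ 0 := by exact_mod_cast Nat.factorial_ne_zero _
  have hnl0 : (((n-l).factorial : ℝ)) ≠ 0 := by exact_mod_cast Nat.factorial_ne_zero _
  push_cast
  field_simp

theorem HB_numbers_identity (ν : ℝ) (hν : ν ≠ 0) (k : ℤ) (n : ℕ) :
    ∑ m ∈ Finset.range (n + 1), (-1 : ℝ) ^ (n - m) * ((n + 1).choose m : ℝ) * HB ν k m 0 =
      ∑ m ∈ Finset.range (n + 1), ∑ l ∈ Finset.Icc m n,
        (-1 : ℝ) ^ (l - m) * (l.choose m : ℝ) * ((n + 1).choose (l + 1) : ℝ) *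
          pB (k - 1) m 0 * Herm ν (n - l) 0 := by
  rw [lhs_eq]
  have hassoc : hermGF ν * pbGF k * (1 - expNeg) = (pbGF k * (1 - expNeg)) * hermGF ν := by ring
  rw [hassoc, rhs_eq]
  exact Finset.sum_comm' (fun l m => by
    simp only [Finset.mem_range, Finset.mem_Icc, Nat.lt_succ_iff]
    omega)
end
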